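/- Suppose θ₁ > 0 with sin(θ₁) ≠ 0 and θ₂ > 0 satisfy θ₁·cot(θ₁) = θ₂·coth(θ₂) = a. If a ∉ {0,1}, then (sin²(θ₁)/θ₁²)·F(θ₂) − (sinh²(θ₂)/θ₂²)·f(θ₁) = (π/2)·a⁻¹·(a−1)·(sin²(θ₁) + sinh²(θ₂))/(θ₁²θ₂²) ≠ 0, where f(θ) = −(π/2)·(θ − cos(θ)sin(θ))/θ³ and F(θ) = (π/2)·(θ − cosh(θ)sinh(θ))/θ³. -/

import Mathlib

/-- Case III (mixed regime): with `f(θ) = −(π/2)(θ − cos θ sin θ)/θ³` and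
`F(θ) = (π/2)(θ − cosh θ sinh θ)/θ³`, if `θ₁ cot θ₁ = θ₂ coth θ₂ = a ∉ {0,1}` then the
determinant expression equals `(π/2)a⁻¹(a−1)(sin²θ₁ + sinh²θ₂)/(θ₁²θ₂²)` and is nonzero. -/
theorem caseIII (θ₁ θ₂ a : ℝ) (h₁ : 0 < θ₁) (h₂ : 0 < θ₂) (hs₁ : Real.sin θ₁ ≠ 0)
    (ha₁ : θ₁ * (Real.cos θ₁ / Real.sin θ₁) = a)
    (ha₂ : θ₂ * (Real.cosh θ₂ / Real.sinh θ₂) = a)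
    (ha0 : a ≠ 0) (ha1 : a ≠ 1) :
    (Real.sin θ₁ ^ 2 / θ₁ ^ 2) *
        ((Real.pi / 2) * (θ₂ - Real.cosh θ₂ * Real.sinh θ₂) / θ₂ ^ 3) -
      (Real.sinh θ₂ ^ 2 / θ₂ ^ 2) *
        (-(Real.pi / 2) * (θ₁ - Real.cos θ₁ * Real.sin θ₁) / θ₁ ^ 3) =
    (Real.pi / 2) * a⁻¹ * (a - 1) *
      (Real.sin θ₁ ^ 2 + Real.sinh θ₂ ^ 2) / (θ₁ ^ 2 * θ₂ ^ 2) ∧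
    (Real.pi / 2) * a⁻¹ * (a - 1) *
      (Real.sin θ₁ ^ 2 + Real.sinh θ₂ ^ 2) / (θ₁ ^ 2 * θ₂ ^ 2) ≠ 0 := by
  have ht1 : θ₁ ≠ 0 := ne_of_gt h₁
  have ht2 : θ₂ ≠ 0 := ne_of_gt h₂
  have hS : Real.sinh θ₂ ≠ 0 := Real.sinh_ne_zero.2 ht2
  have hSp : 0 < Real.sinh θ₂ := Real.sinh_pos_iff.2 h₂
  have hc1 : θ₁ * Real.cos θ₁ = a * Real.sin θ₁ := by field_simp at ha₁; linarith
  have hc2 : θ₂ * Real.cosh θ₂ = a * Real.sinh θ₂ := by field_simp at ha₂; linarith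
  have key1 : Real.sin θ₁ ^ 2 * (θ₁ ^ 2 + a ^ 2) = θ₁ ^ 2 := by
    linear_combination θ₁ ^ 2 * (Real.sin_sq_add_cos_sq θ₁) -
      (a * Real.sin θ₁ + Real.cos θ₁ * θ₁) * hc1
  have key2 : Real.sinh θ₂ ^ 2 * (a ^ 2 - θ₂ ^ 2) = θ₂ ^ 2 := by
    linear_combination θ₂ ^ 2 * (Real.cosh_sq_sub_sinh_sq θ₂) -
      (a * Real.sinh θ₂ + Real.cosh θ₂ * θ₂) * hc2
  have key3 : θ₁ ^ 2 * θ₂ ^ 2 * (Real.sin θ₁ ^ 2 + Real.sinh θ₂ ^ 2) =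
      a ^ 2 * Real.sin θ₁ ^ 2 * Real.sinh θ₂ ^ 2 * (θ₁ ^ 2 + θ₂ ^ 2) := by
    linear_combination (-(θ₁ ^ 2 * Real.sin θ₁ ^ 2)) * key2 - (Real.sinh θ₂ ^ 2 * θ₂ ^ 2) * key1
  constructor
  · field_simp
    apply mul_left_cancel₀ (mul_ne_zero ht1 ht2)
    linear_combination key3 -
      (a * θ₁ ^ 2 * Real.sin θ₁ ^ 2 * Real.sinh θ₂) * hc2 -
      (a * θ₂ ^ 2 * Real.sinh θ₂ ^ 2 * Real.sin θ₁) * hc1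
  · have hsum : (0:ℝ) < Real.sin θ₁ ^ 2 + Real.sinh θ₂ ^ 2 := by positivity
    apply div_ne_zero
    · exact mul_ne_zero (mul_ne_zero (mul_ne_zero
        (div_ne_zero Real.pi_ne_zero two_ne_zero) (inv_ne_zero ha0))
        (sub_ne_zero.2 ha1)) (ne_of_gt hsum)
    · exact mul_ne_zero (pow_ne_zero _ ht1) (pow_ne_zero _ ht2)
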